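/- Let G be a probability measure on ℝ and for μ ∈ ℝ let R(μ,λ) = ∫ (s_λ(x+μ) - μ)² φ(x) dx with s_λ(x) = sgn(x)(|x|-λ)_+. Then the Bayes risk R_G(λ) = ∫ R(u,λ) G(du) satisfies R_G(λ) ≤ ρ_G(√(λ²+1)) + R(0,λ), where ρ_G(t) = ∫ (u² ∧ t²) G(du). -/

import Mathlib

open MeasureTheory Set

noncomputable def stdPDF (x : ℝ) : ℝ := Real.exp (-x^2/2) / Real.sqrt (2*Real.pi)

/-- Soft threshold function s_λ(x) = sgn(x)(|x|-λ)_+. -/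
noncomputable def soft (lam x : ℝ) : ℝ := Real.sign x * max (|x| - lam) 0

/-- Soft threshold risk R(μ,λ) = ∫ (s_λ(x+μ)-μ)² φ(x) dx. -/
noncomputable def softRisk (mu lam : ℝ) : ℝ := ∫ x, (soft lam (x + mu) - mu)^2 * stdPDF x

/-- Bayes risk R_G(λ) = ∫ R(u,λ) G(du). -/
noncomputable def bayesRisk (G : Measure ℝ) (lam : ℝ) : ℝ := ∫ u, softRisk u lam ∂G

/-- ρ_G(t) = ∫ (u² ∧ t²) G(du). -/
noncomputable def rho (G : Measure ℝ) (t : ℝ) : ℝ := ∫ u, min (u^2) (t^2) ∂G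

/- ## Auxiliary lemmas -/

section Aux

open Real Filter

lemma soft_eq {lam : ℝ} (hlam : 0 ≤ lam) (x : ℝ) :
    soft lam x = max (x - lam) 0 + min (x + lam) 0 := by
  unfold soft
  rcases lt_trichotomy x 0 with h | h | h
  · rw [Real.sign_of_neg h, abs_of_neg h]
    rcases le_total (-x - lam) 0 with h1 | h1
    · rw [max_eq_right h1, max_eq_right (by linarith), mul_zero, zero_add]
      rcases le_total (x + lam) 0 with h2 | h2
      · rw [min_eq_left h2]; linarith
      · rw [min_eq_right h2]
    · rw [max_eq_left h1, max_eq_right (by linarith), min_eq_left (by linarith)]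
      ring
  · simp [h, hlam]
  · rw [Real.sign_of_pos h, abs_of_pos h, one_mul, min_eq_right (by positivity : (0:ℝ) ≤ x + lam)]
    simp

set_option maxHeartbeats 1000000 in
lemma soft_pointA {lam : ℝ} (hlam : 0 ≤ lam) (mu x : ℝ) :
    (soft lam (x + mu) - mu)^2 ≤ (soft lam x)^2 + mu^2 := by
  rw [soft_eq hlam, soft_eq hlam]
  rcases max_cases (x + mu - lam) 0 with ⟨e1, i1⟩ | ⟨e1, i1⟩ <;>
  rcases min_cases (x + mu + lam) 0 with ⟨e2, i2⟩ | ⟨e2, i2⟩ <;>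
  rcases max_cases (x - lam) 0 with ⟨e3, i3⟩ | ⟨e3, i3⟩ <;>
  rcases min_cases (x + lam) 0 with ⟨e4, i4⟩ | ⟨e4, i4⟩ <;>
  rw [e1, e2, e3, e4] <;>
  nlinarith [sq_nonneg x, sq_nonneg mu, sq_nonneg lam, sq_nonneg (x+lam), sq_nonneg (x-lam),
    sq_nonneg (x+mu-lam), sq_nonneg (x+mu+lam), sq_nonneg (lam+mu), sq_nonneg (lam-mu)]

set_option maxHeartbeats 1000000 in
lemma soft_pointB {lam : ℝ} (hlam : 0 ≤ lam) (mu x : ℝ) :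
    (soft lam (x + mu) - mu)^2 + (soft lam (-x + mu) - mu)^2 ≤ 2*x^2 + 2*lam^2 := by
  rw [soft_eq hlam, soft_eq hlam]
  rcases max_cases (x + mu - lam) 0 with ⟨e1, i1⟩ | ⟨e1, i1⟩ <;>
  rcases min_cases (x + mu + lam) 0 with ⟨e2, i2⟩ | ⟨e2, i2⟩ <;>
  rcases max_cases (-x + mu - lam) 0 with ⟨e3, i3⟩ | ⟨e3, i3⟩ <;>
  rcases min_cases (-x + mu + lam) 0 with ⟨e4, i4⟩ | ⟨e4, i4⟩ <;>
  rw [e1, e2, e3, e4] <;>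
  nlinarith [sq_nonneg x, sq_nonneg mu, sq_nonneg lam, sq_nonneg (x+lam), sq_nonneg (x-lam),
    sq_nonneg (x+mu-lam), sq_nonneg (x+mu+lam), sq_nonneg (mu-lam), sq_nonneg (mu+lam),
    mul_nonneg hlam hlam]

set_option maxHeartbeats 400000 in
lemma soft_sq_le {lam : ℝ} (hlam : 0 ≤ lam) (x : ℝ) : (soft lam x)^2 ≤ x^2 := by
  rw [soft_eq hlam]
  rcases max_cases (x - lam) 0 with ⟨e3, i3⟩ | ⟨e3, i3⟩ <;>
  rcases min_cases (x + lam) 0 with ⟨e4, i4⟩ | ⟨e4, i4⟩ <;>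
  rw [e3, e4] <;> nlinarith [sq_nonneg x, sq_nonneg lam]

lemma soft_continuous {lam : ℝ} (hlam : 0 ≤ lam) : Continuous (soft lam) := by
  have : soft lam = fun x => max (x - lam) 0 + min (x + lam) 0 := funext (soft_eq hlam)
  rw [this]
  exact ((continuous_id.sub continuous_const).max continuous_const).add
    ((continuous_id.add continuous_const).min continuous_const)

lemma stdPDF_eq (x : ℝ) : stdPDF x = Real.exp (-(1/2) * x^2) * (Real.sqrt (2*Real.pi))⁻¹ := by
  unfold stdPDF; rw [div_eq_mul_inv]; ring_nf

lemma stdPDF_nonneg (x : ℝ) : 0 ≤ stdPDF x := by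
  unfold stdPDF; positivity

lemma stdPDF_neg (x : ℝ) : stdPDF (-x) = stdPDF x := by unfold stdPDF; rw [neg_pow]; ring_nf

lemma stdPDF_continuous : Continuous stdPDF := by
  unfold stdPDF
  exact (Real.continuous_exp.comp (by fun_prop)).div_const _

lemma sqrt_two_pi_pos : 0 < Real.sqrt (2*Real.pi) := Real.sqrt_pos.2 (by positivity)

lemma integrable_stdPDF : Integrable stdPDF := by
  simp_rw [funext stdPDF_eq]
  exact (integrable_exp_neg_mul_sq (by norm_num : (0:ℝ) < 1/2)).mul_const _

lemma integral_stdPDF : ∫ x, stdPDF x = 1 := by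
  simp_rw [funext stdPDF_eq]
  rw [integral_mul_const, integral_gaussian]
  rw [show π / (1/2) = 2 * π by ring]
  exact mul_inv_cancel₀ (ne_of_gt sqrt_two_pi_pos)

lemma integrable_sq_exp : Integrable (fun x : ℝ => x^2 * Real.exp (-(1/2) * x^2)) := by
  have := integrable_rpow_mul_exp_neg_mul_sq (by norm_num : (0:ℝ) < 1/2)
    (by norm_num : (-1:ℝ) < 2)
  convert this using 2 with x
  rw [← Real.rpow_natCast x 2]
  norm_num

lemma integrable_sq_stdPDF : Integrable (fun x : ℝ => x^2 * stdPDF x) := by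
  simp_rw [funext stdPDF_eq, ← mul_assoc]
  exact integrable_sq_exp.mul_const _

lemma integral_sq_stdPDF : ∫ x, x^2 * stdPDF x = 1 := by
  set e : ℝ → ℝ := fun x => Real.exp (-(1/2) * x^2) with he
  have hderiv : ∀ x : ℝ, HasDerivAt (fun x => -x * e x) ((x^2 - 1) * e x) x := by
    intro x
    have h1 : HasDerivAt (fun x : ℝ => -(1/2) * x^2) (-x) x := by
      simpa using ((hasDerivAt_pow 2 x).const_mul (-(1/2) : ℝ))
    have h2 : HasDerivAt e (Real.exp (-(1/2) * x^2) * (-x)) x := h1.exp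
    have h3 : HasDerivAt (fun x : ℝ => -x) (-1) x := (hasDerivAt_id x).neg
    have : HasDerivAt (fun y => -y * e y) _ x := h3.mul h2
    convert this using 1
    show (x^2 - 1) * Real.exp (-(1/2) * x^2) = -1 * Real.exp (-(1/2) * x^2) + -x * (Real.exp (-(1/2) * x^2) * -x)
    ring
  have hint : Integrable (fun x : ℝ => (x^2 - 1) * e x) := by
    have h2 : Integrable e := integrable_exp_neg_mul_sq (by norm_num)
    have := integrable_sq_exp.sub h2
    refine this.congr ?_
    filter_upwards with x
    simp [he]; ring
  have htop : Tendsto (fun x => -x * e x) atTop (nhds 0) := by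
    have h := rpow_mul_exp_neg_mul_sq_isLittleO_exp_neg (by norm_num : (0:ℝ) < 1/2) 1
    have hcmp : Tendsto (fun x : ℝ => Real.exp (-(1/2) * x)) atTop (nhds 0) := by
      have hhalf : Tendsto (fun x : ℝ => (1/2 : ℝ) * x) atTop atTop :=
        Filter.Tendsto.const_mul_atTop (by norm_num) tendsto_id
      have := tendsto_exp_neg_atTop_nhds_zero.comp hhalf
      refine this.congr (fun x => ?_)
      simp [Function.comp]
    have h2 : Tendsto (fun x : ℝ => x ^ (1:ℝ) * Real.exp (-(1/2) * x^2)) atTop (nhds 0) :=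
      h.isBigO.trans_tendsto hcmp
    have h3 : Tendsto (fun x : ℝ => x * e x) atTop (nhds 0) := by
      refine h2.congr' ?_
      filter_upwards with x using by rw [Real.rpow_one]
    simpa using h3.neg
  have hbot : Tendsto (fun x => -x * e x) atBot (nhds 0) := by
    have htop' : Tendsto (fun x : ℝ => x * e x) atTop (nhds 0) := by
      have h0 := htop.neg
      rw [neg_zero] at h0
      refine h0.congr (fun x => by ring)
    have hc := htop'.comp tendsto_neg_atBot_atTop
    refine hc.congr (fun x => ?_)
    show -x * e (-x) = -x * e x
    have hx : e (-x) = e x := by simp [he]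
    rw [hx]
  have key : ∫ x, (x^2 - 1) * e x = 0 := by
    rw [← intervalIntegral.integral_Iic_add_Ioi (b := 0) hint.integrableOn hint.integrableOn]
    rw [integral_Ioi_of_hasDerivAt_of_tendsto' (fun x _ => hderiv x) hint.integrableOn htop]
    rw [integral_Iic_of_hasDerivAt_of_tendsto' (fun x _ => hderiv x) hint.integrableOn hbot]
    ring
  have h2 : Integrable e := integrable_exp_neg_mul_sq (by norm_num)
  have hsub : ∫ x, (x^2 - 1) * e x = (∫ x, x^2 * e x) - ∫ x, e x := by
    simp_rw [sub_mul, one_mul]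
    exact integral_sub integrable_sq_exp h2
  have h4 : ∫ x, x^2 * e x = ∫ x, e x := by linarith [key, hsub]
  simp_rw [funext stdPDF_eq, ← mul_assoc]
  rw [integral_mul_const, h4]
  show (∫ x, e x) * _ = 1
  rw [he, integral_gaussian, show π / (1/2) = 2 * π by ring]
  exact mul_inv_cancel₀ (ne_of_gt sqrt_two_pi_pos)

/- ## softRisk lemmas -/

lemma integrable_softRisk_integrand {lam : ℝ} (hlam : 0 ≤ lam) (mu : ℝ) :
    Integrable (fun x => (soft lam (x + mu) - mu)^2 * stdPDF x) := by
  refine Integrable.mono' (integrable_sq_stdPDF.add (integrable_stdPDF.const_mul (2 * mu^2)))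
    ?_ ?_
  · exact (((((soft_continuous hlam).comp (continuous_id.add continuous_const)).sub
      continuous_const).pow 2).mul stdPDF_continuous).aestronglyMeasurable
  · filter_upwards with x
    rw [Real.norm_eq_abs, abs_of_nonneg (mul_nonneg (sq_nonneg _) (stdPDF_nonneg x))]
    have h1 : (soft lam (x + mu) - mu)^2 ≤ x^2 + 2 * mu^2 := by
      have := soft_pointA hlam mu x
      have := soft_sq_le hlam x
      nlinarith [sq_nonneg mu]
    calc (soft lam (x + mu) - mu)^2 * stdPDF x ≤ (x^2 + 2 * mu^2) * stdPDF x :=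
          mul_le_mul_of_nonneg_right h1 (stdPDF_nonneg x)
      _ = x^2 * stdPDF x + 2 * mu^2 * stdPDF x := by ring

lemma softRisk_nonneg (mu lam : ℝ) : 0 ≤ softRisk mu lam :=
  integral_nonneg fun x => mul_nonneg (sq_nonneg _) (stdPDF_nonneg x)

lemma softRisk_zero (lam : ℝ) :
    softRisk 0 lam = ∫ x, (soft lam x)^2 * stdPDF x := by
  unfold softRisk; simp

lemma softRisk_le_A {lam : ℝ} (hlam : 0 ≤ lam) (mu : ℝ) :
    softRisk mu lam ≤ mu^2 + softRisk 0 lam := by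
  have hI0 : Integrable (fun x => (soft lam x)^2 * stdPDF x) := by
    have := integrable_softRisk_integrand hlam 0
    simpa using this
  have hrhs : Integrable (fun x => ((soft lam x)^2 + mu^2) * stdPDF x) := by
    have : (fun x => ((soft lam x)^2 + mu^2) * stdPDF x)
        = fun x => (soft lam x)^2 * stdPDF x + mu^2 * stdPDF x := by
      funext x; ring
    rw [this]
    exact hI0.add (integrable_stdPDF.const_mul _)
  have hmono : softRisk mu lam ≤ ∫ x, ((soft lam x)^2 + mu^2) * stdPDF x := by
    refine integral_mono (integrable_softRisk_integrand hlam mu) hrhs fun x => ?_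
    exact mul_le_mul_of_nonneg_right (soft_pointA hlam mu x) (stdPDF_nonneg x)
  have heval : ∫ x, ((soft lam x)^2 + mu^2) * stdPDF x = softRisk 0 lam + mu^2 := by
    have : (fun x => ((soft lam x)^2 + mu^2) * stdPDF x)
        = fun x => (soft lam x)^2 * stdPDF x + mu^2 * stdPDF x := by
      funext x; ring
    rw [this, integral_add hI0 (integrable_stdPDF.const_mul _), softRisk_zero,
      integral_const_mul, integral_stdPDF, mul_one]
  linarith

lemma softRisk_le_B {lam : ℝ} (hlam : 0 ≤ lam) (mu : ℝ) :
    softRisk mu lam ≤ lam^2 + 1 := by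
  have hI : Integrable (fun x => (soft lam (x + mu) - mu)^2 * stdPDF x) :=
    integrable_softRisk_integrand hlam mu
  have hIneg : Integrable (fun x => (soft lam (-x + mu) - mu)^2 * stdPDF x) := by
    have := hI.comp_neg
    refine this.congr ?_
    filter_upwards with x
    rw [stdPDF_neg]
  have heq : ∫ x, (soft lam (-x + mu) - mu)^2 * stdPDF x = softRisk mu lam := by
    have h1 : (fun x => (soft lam (-x + mu) - mu)^2 * stdPDF x)
        = fun x => (soft lam (-x + mu) - mu)^2 * stdPDF (-x) := by
      funext x; rw [stdPDF_neg]
    rw [h1]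
    exact integral_neg_eq_self (fun x => (soft lam (x + mu) - mu)^2 * stdPDF x) volume
  have hrhs : Integrable (fun x : ℝ => (2*x^2 + 2*lam^2) * stdPDF x) := by
    have : (fun x : ℝ => (2*x^2 + 2*lam^2) * stdPDF x)
        = fun x => 2 * (x^2 * stdPDF x) + (2*lam^2) * stdPDF x := by
      funext x; ring
    rw [this]
    exact (integrable_sq_stdPDF.const_mul 2).add (integrable_stdPDF.const_mul _)
  have hmono : (∫ x, ((soft lam (x + mu) - mu)^2 * stdPDF x
        + (soft lam (-x + mu) - mu)^2 * stdPDF x))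
      ≤ ∫ x, (2*x^2 + 2*lam^2) * stdPDF x := by
    refine integral_mono (hI.add hIneg) hrhs fun x => ?_
    have := soft_pointB hlam mu x
    calc (soft lam (x + mu) - mu)^2 * stdPDF x + (soft lam (-x + mu) - mu)^2 * stdPDF x
        = ((soft lam (x + mu) - mu)^2 + (soft lam (-x + mu) - mu)^2) * stdPDF x := by ring
      _ ≤ (2*x^2 + 2*lam^2) * stdPDF x :=
          mul_le_mul_of_nonneg_right this (stdPDF_nonneg x)
  have hL : (∫ x, ((soft lam (x + mu) - mu)^2 * stdPDF x
        + (soft lam (-x + mu) - mu)^2 * stdPDF x)) = 2 * softRisk mu lam := by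
    rw [integral_add hI hIneg, heq]
    unfold softRisk; ring
  have hR : (∫ x, (2*x^2 + 2*lam^2) * stdPDF x) = 2 + 2*lam^2 := by
    have : (fun x : ℝ => (2*x^2 + 2*lam^2) * stdPDF x)
        = fun x => 2 * (x^2 * stdPDF x) + (2*lam^2) * stdPDF x := by
      funext x; ring
    rw [this, integral_add (integrable_sq_stdPDF.const_mul 2) (integrable_stdPDF.const_mul _),
      integral_const_mul, integral_const_mul, integral_sq_stdPDF, integral_stdPDF]
    ring
  rw [hL, hR] at hmono
  linarith

end Aux

theorem stmt5 (G : Measure ℝ) [IsProbabilityMeasure G] (lam : ℝ) (hlam : 0 ≤ lam) :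
    bayesRisk G lam ≤ rho G (Real.sqrt (lam^2 + 1)) + softRisk 0 lam := by
  have ht : (Real.sqrt (lam^2 + 1))^2 = lam^2 + 1 := Real.sq_sqrt (by positivity)
  set C := softRisk 0 lam with hC
  have hC0 : 0 ≤ C := softRisk_nonneg 0 lam
  have hrho0 : 0 ≤ rho G (Real.sqrt (lam^2 + 1)) :=
    integral_nonneg fun u => le_min (sq_nonneg _) (sq_nonneg _)
  have hpt : ∀ u : ℝ, softRisk u lam ≤ min (u^2) ((Real.sqrt (lam^2 + 1))^2) + C := by
    intro u
    rw [ht]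
    rcases le_total (u^2) (lam^2 + 1) with h | h
    · rw [min_eq_left h]
      exact softRisk_le_A hlam u
    · rw [min_eq_right h]
      calc softRisk u lam ≤ lam^2 + 1 := softRisk_le_B hlam u
        _ ≤ lam^2 + 1 + C := by linarith
  by_cases hf : Integrable (fun u => softRisk u lam) G
  · have hbd : Integrable (fun u : ℝ => min (u^2) ((Real.sqrt (lam^2 + 1))^2) + C) G := by
      refine Integrable.add ?_ (integrable_const C)
      refine Integrable.mono' (integrable_const ((Real.sqrt (lam^2 + 1))^2)) ?_ ?_
      · exact ((continuous_pow 2).min continuous_const).aestronglyMeasurable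
      · filter_upwards with u
        rw [Real.norm_eq_abs, abs_of_nonneg (le_min (sq_nonneg _) (sq_nonneg _))]
        exact min_le_right _ _
    have hle : bayesRisk G lam
        ≤ ∫ u, (min (u^2) ((Real.sqrt (lam^2 + 1))^2) + C) ∂G :=
      integral_mono hf hbd hpt
    have heval : ∫ u, (min (u^2) ((Real.sqrt (lam^2 + 1))^2) + C) ∂G
        = rho G (Real.sqrt (lam^2 + 1)) + C := by
      rw [integral_add ?_ (integrable_const C), integral_const, probReal_univ,
        one_smul]
      · rfl
      · refine Integrable.mono' (integrable_const ((Real.sqrt (lam^2 + 1))^2)) ?_ ?_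
        · exact ((continuous_pow 2).min continuous_const).aestronglyMeasurable
        · filter_upwards with u
          rw [Real.norm_eq_abs, abs_of_nonneg (le_min (sq_nonneg _) (sq_nonneg _))]
          exact min_le_right _ _
    rw [heval] at hle
    exact hle
  · unfold bayesRisk
    rw [integral_undef hf]
    positivity
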